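/- In the degenerate even-period case, the sign in the identity ∏_{i=0}^{n-1}(x_i - λ_i) = ± ∏_{i=0}^{n-1} λ_i is determined by the parity of n/2: the sign is + if n ≡ 0 (mod 4) and − if n ≡ 2 (mod 4). -/

import Mathlib

open Finset

lemma prod_range_two_mul' {M : Type*} [CommMonoid M] (m : ℕ) (f : ℕ → M) :
    ∏ i ∈ Finset.range (2 * m), f i =
      ∏ k ∈ Finset.range m, (f (2 * k) * f (2 * k + 1)) := by
  induction m with
  | zero => simp
  | succ n ih =>
      have : 2 * (n + 1) = (2 * n) + 1 + 1 := by ring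
      rw [this, Finset.prod_range_succ, Finset.prod_range_succ,
        Finset.prod_range_succ, ih]
      rw [mul_assoc]

/-- In the degenerate even-period case (`n = 2m`, `λᵢ > 0`,
`λ₀λ₂⋯λ_{2m-2} = λ₁λ₃⋯λ_{2m-1}`, focusing recurrence
`x_{i+1} - λ_{i+1} = -λ_{i+1}²/(xᵢ - λᵢ)`), the sign in
`∏(xᵢ - λᵢ) = ± ∏ λᵢ` is determined by the parity of `n/2`:
it is `+` if `n ≡ 0 (mod 4)` and `−` if `n ≡ 2 (mod 4)`. -/
theorem degenerate_sign_parity (m : ℕ) (hm : 1 ≤ m)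
    (lam : ℕ → ℝ) (hpos : ∀ i, 0 < lam i)
    (hbal : ∏ k ∈ Finset.range m, lam (2 * k) =
      ∏ k ∈ Finset.range m, lam (2 * k + 1))
    (x : ℕ → ℝ) (hne : ∀ i < 2 * m, x i ≠ lam i)
    (hrec : ∀ i, i + 1 < 2 * m →
      x (i + 1) - lam (i + 1) = -(lam (i + 1)) ^ 2 / (x i - lam i)) :
    ((2 * m) % 4 = 0 →
      ∏ i ∈ Finset.range (2 * m), (x i - lam i) =
        ∏ i ∈ Finset.range (2 * m), lam i) ∧
    ((2 * m) % 4 = 2 →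
      ∏ i ∈ Finset.range (2 * m), (x i - lam i) =
        -∏ i ∈ Finset.range (2 * m), lam i) := by
  have key : ∏ i ∈ Finset.range (2 * m), (x i - lam i) =
      (-1 : ℝ) ^ m * ∏ i ∈ Finset.range (2 * m), lam i := by
    rw [prod_range_two_mul' m (fun i => x i - lam i)]
    have hpair : ∀ k ∈ Finset.range m,
        (x (2 * k) - lam (2 * k)) * (x (2 * k + 1) - lam (2 * k + 1)) =
          -(lam (2 * k + 1)) ^ 2 := by
      intro k hk
      rw [Finset.mem_range] at hk
      have hlt : 2 * k + 1 < 2 * m := by omega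
      have h0 : x (2 * k) ≠ lam (2 * k) := hne _ (by omega)
      have hr := hrec (2 * k) hlt
      have hs : x (2 * k) - lam (2 * k) ≠ 0 := sub_ne_zero.mpr h0
      rw [hr]
      field_simp
    rw [Finset.prod_congr rfl hpair]
    have h2 : ∀ k : ℕ, -(lam (2 * k + 1)) ^ 2 =
        (-1 : ℝ) * (lam (2 * k + 1) * lam (2 * k + 1)) := by intro k; ring
    simp only [h2]
    rw [Finset.prod_mul_distrib, Finset.prod_mul_distrib, Finset.prod_const,
      Finset.card_range]
    nth_rewrite 1 [← hbal]
    rw [← Finset.prod_mul_distrib, ← prod_range_two_mul' m lam]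
  constructor
  · intro h4
    have : m % 2 = 0 := by omega
    rw [key, Even.neg_one_pow (Nat.even_iff.mpr this), one_mul]
  · intro h4
    have : m % 2 = 1 := by omega
    rw [key, Odd.neg_one_pow (Nat.odd_iff.mpr this), neg_one_mul]
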